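/- For any integers s and i with i odd, the conjugacy class of a^s u^i in G is {a^s u^i, a^(s+2^(l-1)) u^i, a^(-s) u^(-i), a^(-s+2^(l-1)) u^(-i)}, and in particular has exactly 4 elements. -/

import Mathlib

namespace ZkDl

def n₁ (l : ℕ) : ℕ := 2 ^ (l - 1) + 1
def n₂ (l : ℕ) : ℕ := 2 ^ (l - 1) - 1

/-- The relations of the presentation
`⟨a, u, v | a^(2^l) = u^k = v^2 = 1, u a u⁻¹ = a^(n₁), v a v = a^(n₂), v u v = u⁻¹⟩`,
with generators `a = 0`, `u = 1`, `v = 2` in `Fin 3`. -/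
def rels (l k : ℕ) : Set (FreeGroup (Fin 3)) :=
  { FreeGroup.of 0 ^ 2 ^ l,
    FreeGroup.of 1 ^ k,
    FreeGroup.of 2 ^ 2,
    FreeGroup.of 1 * FreeGroup.of 0 * (FreeGroup.of 1)⁻¹ * (FreeGroup.of 0 ^ n₁ l)⁻¹,
    FreeGroup.of 2 * FreeGroup.of 0 * FreeGroup.of 2 * (FreeGroup.of 0 ^ n₂ l)⁻¹,
    FreeGroup.of 2 * FreeGroup.of 1 * FreeGroup.of 2 * FreeGroup.of 1 }

/-- The group `Z_{2^l} ⋊ D_k` given by the presentation above. -/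
abbrev G (l k : ℕ) : Type := PresentedGroup (rels l k)

def a (l k : ℕ) : G l k := PresentedGroup.of 0
def u (l k : ℕ) : G l k := PresentedGroup.of 1
def v (l k : ℕ) : G l k := PresentedGroup.of 2

end ZkDl

open ZkDl


variable {l k : ℕ}

lemma mk_rel_one {r : FreeGroup (Fin 3)} (h : r ∈ rels l k) :
    PresentedGroup.mk (rels l k) r = 1 := by
  have : (QuotientGroup.mk r : PresentedGroup (rels l k)) = 1 := by
    rw [QuotientGroup.eq_one_iff]
    exact Subgroup.subset_normalClosure h
  exact this

lemma mk_of (x : Fin 3) : PresentedGroup.mk (rels l k) (FreeGroup.of x) = PresentedGroup.of x := rfl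

lemma a_pow : a l k ^ (2 ^ l) = 1 := by
  have := mk_rel_one (l := l) (k := k) (by left; rfl)
  simpa [a, mk_of] using this

lemma u_pow : u l k ^ k = 1 := by
  have := mk_rel_one (l := l) (k := k) (by right; left; rfl)
  simpa [u, mk_of] using this

lemma v_sq : v l k ^ 2 = 1 := by
  have := mk_rel_one (l := l) (k := k) (by right; right; left; rfl)
  simpa [v, mk_of] using this

lemma uau : u l k * a l k * (u l k)⁻¹ = a l k ^ (n₁ l) := by
  have := mk_rel_one (l := l) (k := k) (by right; right; right; left; rfl)
  have h : u l k * a l k * (u l k)⁻¹ * (a l k ^ n₁ l)⁻¹ = 1 := by simpa [a, u, mk_of] using this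
  have := mul_eq_one_iff_eq_inv.mp h
  rw [this]; group


lemma vav : v l k * a l k * v l k = a l k ^ (n₂ l) := by
  have := mk_rel_one (l := l) (k := k) (by right; right; right; right; left; rfl)
  have h : v l k * a l k * v l k * (a l k ^ n₂ l)⁻¹ = 1 := by simpa [a, v, mk_of] using this
  have := mul_eq_one_iff_eq_inv.mp h
  rw [this]; group

lemma vuv : v l k * u l k * v l k = (u l k)⁻¹ := by
  have := mk_rel_one (l := l) (k := k) (by right; right; right; right; right; rfl)
  have h : v l k * u l k * v l k * u l k = 1 := by simpa [u, v, mk_of] using this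
  have := mul_eq_one_iff_eq_inv.mp h
  rw [this]

lemma v_inv : (v l k)⁻¹ = v l k := by
  have h := v_sq (l := l) (k := k)
  rw [pow_two] at h
  exact inv_eq_of_mul_eq_one_right h

lemma a_zpow_natpow : a l k ^ ((2:ℤ) ^ l) = 1 := by
  have : ((2:ℤ) ^ l) = ((2 ^ l : ℕ) : ℤ) := by push_cast; ring
  rw [this, zpow_natCast, a_pow]

lemma a_zpow_eq {m m' : ℤ} (h : ((2:ℤ) ^ l) ∣ m - m') : a l k ^ m = a l k ^ m' := by
  obtain ⟨t, ht⟩ := h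
  have hm : m = m' + (2:ℤ) ^ l * t := by linarith
  rw [hm, zpow_add, zpow_mul, a_zpow_natpow, one_zpow, mul_one]

lemma u_zpow_eq {j j' : ℤ} (h : ((k:ℤ)) ∣ j - j') : u l k ^ j = u l k ^ j' := by
  obtain ⟨t, ht⟩ := h
  have hm : j = j' + (k:ℤ) * t := by linarith
  have hk : u l k ^ ((k:ℕ):ℤ) = 1 := by rw [zpow_natCast, u_pow]
  rw [hm, zpow_add, zpow_mul, hk, one_zpow, mul_one]

lemma uau_z (m : ℤ) : u l k * a l k ^ m * (u l k)⁻¹ = a l k ^ ((n₁ l : ℤ) * m) := by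
  rw [← conj_zpow, uau, ← zpow_natCast, ← zpow_mul]

lemma vav_z (m : ℤ) : v l k * a l k ^ m * (v l k)⁻¹ = a l k ^ ((n₂ l : ℤ) * m) := by
  have h2 : v l k * a l k * (v l k)⁻¹ = a l k ^ (n₂ l) := by rw [v_inv]; exact vav
  rw [← conj_zpow, h2, ← zpow_natCast, ← zpow_mul]

lemma vuv_z (j : ℤ) : v l k * u l k ^ j * (v l k)⁻¹ = u l k ^ (-j) := by
  have h2 : v l k * u l k * (v l k)⁻¹ = (u l k)⁻¹ := by rw [v_inv]; exact vuv
  rw [← conj_zpow, h2, ← zpow_neg_one, ← zpow_mul, neg_one_mul]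

lemma n₁_cast : ((n₁ l : ℤ)) = 2 ^ (l - 1) + 1 := by
  simp [n₁]

lemma n₂_cast : ((n₂ l : ℤ)) = 2 ^ (l - 1) - 1 := by
  have h : 1 ≤ 2 ^ (l - 1) := Nat.one_le_two_pow
  simp [n₂, Nat.cast_sub h]

lemma n₁_sq_dvd (hl : 3 ≤ l) : ((2:ℤ) ^ l) ∣ (n₁ l : ℤ) ^ 2 - 1 := by
  obtain ⟨l', rfl⟩ : ∃ l', l = l' + 3 := ⟨l - 3, by omega⟩
  rw [n₁_cast]
  refine ⟨2 ^ (l' + 1) + 1, ?_⟩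
  show ((2:ℤ) ^ (l' + 3 - 1) + 1) ^ 2 - 1 = 2 ^ (l' + 3) * (2 ^ (l' + 1) + 1)
  simp only [show l' + 3 - 1 = l' + 2 from rfl]
  ring

lemma uainv_z (hl : 3 ≤ l) (m : ℤ) :
    (u l k)⁻¹ * a l k ^ m * u l k = a l k ^ ((n₁ l : ℤ) * m) := by
  have h := uau_z (l := l) (k := k) ((n₁ l : ℤ) * m)
  have h2 : a l k ^ ((n₁ l:ℤ) * ((n₁ l:ℤ) * m)) = a l k ^ m := by
    apply a_zpow_eq
    have : (n₁ l:ℤ) * ((n₁ l:ℤ) * m) - m = ((n₁ l:ℤ)^2 - 1) * m := by ring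
    rw [this]
    exact Dvd.dvd.mul_right (n₁_sq_dvd hl) m
  rw [h2] at h
  have := h.symm
  calc (u l k)⁻¹ * a l k ^ m * u l k
      = (u l k)⁻¹ * (u l k * a l k ^ ((n₁ l:ℤ)*m) * (u l k)⁻¹) * u l k := by rw [h]
    _ = a l k ^ ((n₁ l:ℤ)*m) := by group

lemma u_even_conj (hl : 3 ≤ l) (m : ℤ) : ∀ t : ℤ,
    u l k ^ (2*t) * a l k ^ m * (u l k ^ (2*t))⁻¹ = a l k ^ m := by
  have key : ∀ m' : ℤ, u l k * (u l k * a l k ^ m' * (u l k)⁻¹) * (u l k)⁻¹ = a l k ^ m' := by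
    intro m'
    rw [uau_z, uau_z]
    apply a_zpow_eq
    have : (n₁ l:ℤ) * ((n₁ l:ℤ) * m') - m' = ((n₁ l:ℤ)^2 - 1) * m' := by ring
    rw [this]; exact Dvd.dvd.mul_right (n₁_sq_dvd hl) m'
  have key' : ∀ m' : ℤ, (u l k)⁻¹ * ((u l k)⁻¹ * a l k ^ m' * u l k) * u l k = a l k ^ m' := by
    intro m'
    rw [uainv_z hl, uainv_z hl]
    apply a_zpow_eq
    have : (n₁ l:ℤ) * ((n₁ l:ℤ) * m') - m' = ((n₁ l:ℤ)^2 - 1) * m' := by ring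
    rw [this]; exact Dvd.dvd.mul_right (n₁_sq_dvd hl) m'
  intro t
  induction t using Int.induction_on with
  | zero => simp
  | succ t ih =>
      have h2 : u l k ^ (2*(t+1):ℤ) = u l k ^ (2:ℤ) * u l k ^ (2*t:ℤ) := by
        rw [← zpow_add]; ring_nf
      rw [h2]
      have : u l k ^ (2:ℤ) * u l k ^ (2*t:ℤ) * a l k ^ m * (u l k ^ (2:ℤ) * u l k ^ (2*t:ℤ))⁻¹
          = u l k * (u l k * (u l k ^ (2*t:ℤ) * a l k ^ m * (u l k ^ (2*t:ℤ))⁻¹) * (u l k)⁻¹) * (u l k)⁻¹ := by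
        group
      rw [this, ih, key]
  | pred t ih =>
      have h2 : u l k ^ (2*(-t-1):ℤ) = (u l k)⁻¹ * (u l k)⁻¹ * u l k ^ (2*(-t):ℤ) := by
        rw [show ((u l k)⁻¹ : G l k) = u l k ^ (-1:ℤ) by group, ← zpow_add, ← zpow_add]
        congr 1
        ring
      rw [h2]
      have : (u l k)⁻¹ * (u l k)⁻¹ * u l k ^ (2*(-t):ℤ) * a l k ^ m *
            ((u l k)⁻¹ * (u l k)⁻¹ * u l k ^ (2*(-t):ℤ))⁻¹
          = (u l k)⁻¹ * ((u l k)⁻¹ * (u l k ^ (2*(-t):ℤ) * a l k ^ m * (u l k ^ (2*(-t):ℤ))⁻¹) * u l k) * u l k := by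
        group
      rw [this, ih, key']

lemma uau_odd (hl : 3 ≤ l) {j : ℤ} (hj : Odd j) (m : ℤ) :
    u l k ^ j * a l k ^ m * (u l k ^ j)⁻¹ = a l k ^ ((n₁ l : ℤ) * m) := by
  obtain ⟨t, rfl⟩ := hj
  have h2 : u l k ^ (2*t+1:ℤ) = u l k ^ (2*t:ℤ) * u l k := by
    rw [← zpow_add_one]
  rw [h2]
  have : u l k ^ (2*t:ℤ) * u l k * a l k ^ m * (u l k ^ (2*t:ℤ) * u l k)⁻¹
      = u l k ^ (2*t:ℤ) * (u l k * a l k ^ m * (u l k)⁻¹) * (u l k ^ (2*t:ℤ))⁻¹ := by group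
  rw [this, uau_z, u_even_conj hl]

lemma conj_a (hl : 3 ≤ l) {j : ℤ} (hj : Odd j) (m : ℤ) :
    a l k * (a l k ^ m * u l k ^ j) * (a l k)⁻¹
      = a l k ^ (m + 2 ^ (l-1)) * u l k ^ j := by
  have step : a l k * (a l k ^ m * u l k ^ j) * (a l k)⁻¹
      = a l k ^ (m+1) * (u l k ^ j * a l k ^ (-1:ℤ) * (u l k ^ j)⁻¹) * u l k ^ j := by
    rw [zpow_add_one, zpow_neg_one]
    group
  rw [step, uau_odd hl hj]
  have e : a l k ^ (m+1) * a l k ^ ((n₁ l:ℤ) * (-1)) = a l k ^ (m + 2 ^ (l-1)) := by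
    rw [← zpow_add]
    apply a_zpow_eq
    rw [n₁_cast]
    obtain ⟨l', rfl⟩ : ∃ l', l = l' + 3 := ⟨l - 3, by omega⟩
    simp only [show l' + 3 - 1 = l' + 2 from rfl]
    refine ⟨-1, by ring⟩
  rw [mul_assoc, ← mul_assoc (a l k ^ (m+1)), e]

lemma conj_a_inv (hl : 3 ≤ l) {j : ℤ} (hj : Odd j) (m : ℤ) :
    (a l k)⁻¹ * (a l k ^ m * u l k ^ j) * a l k
      = a l k ^ (m + 2 ^ (l-1)) * u l k ^ j := by
  have step : (a l k)⁻¹ * (a l k ^ m * u l k ^ j) * a l k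
      = a l k ^ (m-1) * (u l k ^ j * a l k ^ (1:ℤ) * (u l k ^ j)⁻¹) * u l k ^ j := by
    rw [zpow_sub_one, zpow_one]
    group
  rw [step, uau_odd hl hj]
  have e : a l k ^ (m-1) * a l k ^ ((n₁ l:ℤ) * 1) = a l k ^ (m + 2 ^ (l-1)) := by
    rw [← zpow_add]
    apply a_zpow_eq
    rw [n₁_cast]
    refine ⟨0, by ring⟩
  rw [mul_assoc, ← mul_assoc (a l k ^ (m-1)), e]

lemma conj_u (m j : ℤ) :
    u l k * (a l k ^ m * u l k ^ j) * (u l k)⁻¹ = a l k ^ ((n₁ l:ℤ) * m) * u l k ^ j := by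
  have step : u l k * (a l k ^ m * u l k ^ j) * (u l k)⁻¹
      = (u l k * a l k ^ m * (u l k)⁻¹) * u l k ^ j := by group
  rw [step, uau_z]

lemma conj_u_inv (hl : 3 ≤ l) (m j : ℤ) :
    (u l k)⁻¹ * (a l k ^ m * u l k ^ j) * u l k = a l k ^ ((n₁ l:ℤ) * m) * u l k ^ j := by
  have step : (u l k)⁻¹ * (a l k ^ m * u l k ^ j) * u l k
      = ((u l k)⁻¹ * a l k ^ m * u l k) * u l k ^ j := by group
  rw [step, uainv_z hl]

lemma conj_v (m j : ℤ) :
    v l k * (a l k ^ m * u l k ^ j) * (v l k)⁻¹ = a l k ^ ((n₂ l:ℤ) * m) * u l k ^ (-j) := by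
  have step : v l k * (a l k ^ m * u l k ^ j) * (v l k)⁻¹
      = (v l k * a l k ^ m * (v l k)⁻¹) * (v l k * u l k ^ j * (v l k)⁻¹) := by group
  rw [step, vav_z, vuv_z]

lemma red1 (hl : 3 ≤ l) (m : ℤ) :
    a l k ^ ((n₁ l:ℤ) * m) = a l k ^ m ∨ a l k ^ ((n₁ l:ℤ) * m) = a l k ^ (m + 2 ^ (l-1)) := by
  obtain ⟨l', rfl⟩ : ∃ l', l = l' + 3 := ⟨l - 3, by omega⟩
  simp only [n₁_cast, show l' + 3 - 1 = l' + 2 from rfl]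
  rcases Int.even_or_odd m with ⟨c, rfl⟩ | ⟨c, rfl⟩
  · left; apply a_zpow_eq; refine ⟨c, by ring⟩
  · right; apply a_zpow_eq; refine ⟨c, by ring⟩

lemma red2 (hl : 3 ≤ l) (m : ℤ) :
    a l k ^ ((n₂ l:ℤ) * m) = a l k ^ (-m) ∨ a l k ^ ((n₂ l:ℤ) * m) = a l k ^ (-m + 2 ^ (l-1)) := by
  obtain ⟨l', rfl⟩ : ∃ l', l = l' + 3 := ⟨l - 3, by omega⟩
  simp only [n₂_cast, show l' + 3 - 1 = l' + 2 from rfl]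
  rcases Int.even_or_odd m with ⟨c, rfl⟩ | ⟨c, rfl⟩
  · left; apply a_zpow_eq; refine ⟨c, by ring⟩
  · right; apply a_zpow_eq; refine ⟨c, by ring⟩


section Facts
variable {l k : ℕ}

lemma P_mul_P (hl : 3 ≤ l) :
    ((2^(l-1) : ℕ) : ZMod (2^l)) * ((2^(l-1) : ℕ) : ZMod (2^l)) = 0 := by
  obtain ⟨l', rfl⟩ : ∃ l', l = l' + 3 := ⟨l - 3, by omega⟩
  rw [← Nat.cast_mul, ZMod.natCast_eq_zero_iff]
  simp only [show l' + 3 - 1 = l' + 2 from rfl, ← pow_add]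
  exact pow_dvd_pow 2 (by omega)

lemma P_add_P (hl : 3 ≤ l) :
    ((2^(l-1) : ℕ) : ZMod (2^l)) + ((2^(l-1) : ℕ) : ZMod (2^l)) = 0 := by
  obtain ⟨l', rfl⟩ : ∃ l', l = l' + 3 := ⟨l - 3, by omega⟩
  rw [← Nat.cast_add, ZMod.natCast_eq_zero_iff]
  simp only [show l' + 3 - 1 = l' + 2 from rfl]
  refine ⟨1, by ring⟩

lemma c_cast : ((n₁ l : ℕ) : ZMod (2^l)) = ((2^(l-1) : ℕ) : ZMod (2^l)) + 1 := by
  simp [n₁]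

lemma d_cast : ((n₂ l : ℕ) : ZMod (2^l)) = ((2^(l-1) : ℕ) : ZMod (2^l)) - 1 := by
  have h : 1 ≤ 2 ^ (l - 1) := Nat.one_le_two_pow
  rw [n₂, Nat.cast_sub h, Nat.cast_one]

lemma hc (hl : 3 ≤ l) : ((n₁ l : ℕ) : ZMod (2^l)) * ((n₁ l : ℕ) : ZMod (2^l)) = 1 := by
  rw [c_cast]
  have h1 := P_mul_P (l := l) hl
  have h2 := P_add_P (l := l) hl
  set P := ((2^(l-1) : ℕ) : ZMod (2^l))
  linear_combination h1 + h2

lemma hd (hl : 3 ≤ l) : ((n₂ l : ℕ) : ZMod (2^l)) * ((n₂ l : ℕ) : ZMod (2^l)) = 1 := by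
  rw [d_cast]
  have h1 := P_mul_P (l := l) hl
  have h2 := P_add_P (l := l) hl
  set P := ((2^(l-1) : ℕ) : ZMod (2^l))
  linear_combination h1 - h2

lemma hdc (hl : 3 ≤ l) :
    ((n₂ l : ℕ) : ZMod (2^l)) * ((n₁ l : ℕ) : ZMod (2^l))
      * (((n₂ l : ℕ) : ZMod (2^l)) * ((n₁ l : ℕ) : ZMod (2^l))) = 1 := by
  rw [c_cast, d_cast]
  have h1 := P_mul_P (l := l) hl
  have h2 := P_add_P (l := l) hl
  set P := ((2^(l-1) : ℕ) : ZMod (2^l))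
  linear_combination (P^2 - 2) * h1

end Facts

section Rep
variable (l k : ℕ)

abbrev M := ZMod (2 ^ l) × ZMod k

def cA : Equiv.Perm (M l k) :=
  ⟨fun p => (p.1 + 1, p.2), fun p => (p.1 - 1, p.2), fun p => by simp, fun p => by simp⟩

def cU (hl : 3 ≤ l) : Equiv.Perm (M l k) :=
  ⟨fun p => (((n₁ l : ℕ) : ZMod (2^l)) * p.1, p.2 + 1),
   fun p => (((n₁ l : ℕ) : ZMod (2^l)) * p.1, p.2 - 1),
   fun p => by simp [← mul_assoc, hc hl],
   fun p => by simp [← mul_assoc, hc hl]⟩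

def cV (hl : 3 ≤ l) : Equiv.Perm (M l k) :=
  ⟨fun p => (((n₂ l : ℕ) : ZMod (2^l)) * p.1, -p.2),
   fun p => (((n₂ l : ℕ) : ZMod (2^l)) * p.1, -p.2),
   fun p => by simp [← mul_assoc, hd hl],
   fun p => by simp [← mul_assoc, hd hl]⟩

end Rep

section Rep2
variable {l k : ℕ}

lemma cA_pow (n : ℕ) (p : M l k) : (cA l k ^ n) p = (p.1 + n, p.2) := by
  induction n with
  | zero => simp
  | succ n ih =>
      rw [pow_succ']
      have : (cA l k * cA l k ^ n) p = cA l k ((cA l k ^ n) p) := rfl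
      rw [this, ih]
      show (p.1 + n + 1, p.2) = _
      push_cast
      rw [add_assoc]

lemma cU_pow (hl : 3 ≤ l) (n : ℕ) (p : M l k) :
    (cU l k hl ^ n) p = ((((n₁ l : ℕ) : ZMod (2^l)))^n * p.1, p.2 + n) := by
  induction n with
  | zero => simp
  | succ n ih =>
      rw [pow_succ']
      have : (cU l k hl * cU l k hl ^ n) p = cU l k hl ((cU l k hl ^ n) p) := rfl
      rw [this, ih]
      show (_ * (_ * p.1), p.2 + n + 1) = _
      rw [← mul_assoc, ← pow_succ']
      push_cast
      rw [add_assoc]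

def fgen (l k : ℕ) (hl : 3 ≤ l) : Fin 3 → Equiv.Perm (M l k) := ![cA l k, cU l k hl, cV l k hl]

lemma rels_map_one (hl : 3 ≤ l) (hk : 4 ∣ k) :
    ∀ r ∈ rels l k, FreeGroup.lift (fgen l k hl) r = 1 := by
  intro r hr
  have f0 : FreeGroup.lift (fgen l k hl) (FreeGroup.of 0) = cA l k := by simp [fgen]
  have f1 : FreeGroup.lift (fgen l k hl) (FreeGroup.of 1) = cU l k hl := by simp [fgen]
  have f2 : FreeGroup.lift (fgen l k hl) (FreeGroup.of 2) = cV l k hl := by simp [fgen]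
  rcases hr with h | h | h | h | h | h
  · -- a ^ 2^l
    rw [h, map_pow, f0]
    ext p <;> simp [cA_pow, ZMod.natCast_self]
  · -- u ^ k
    rw [h, map_pow, f1]
    obtain ⟨t, rfl⟩ : ∃ t, k = 2 * t := ⟨k / 2, by omega⟩
    ext p
    · rw [Equiv.Perm.one_apply, cU_pow hl]
      show (((n₁ l : ℕ) : ZMod (2^l)))^(2*t) * p.1 = p.1
      rw [pow_mul, pow_two, hc hl, one_pow, one_mul]
    · rw [Equiv.Perm.one_apply, cU_pow hl]
      show p.2 + ((2*t : ℕ) : ZMod (2*t)) = p.2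
      rw [ZMod.natCast_self, add_zero]
  · -- v ^ 2
    rw [h, map_pow, f2]
    ext p <;> simp [pow_two, Equiv.Perm.mul_apply, cV, ← mul_assoc, hd hl]
  · -- u a u⁻¹ (a^n₁)⁻¹
    rw [h]
    simp only [map_mul, map_inv, map_pow, f0, f1]
    rw [mul_inv_eq_one]
    ext p
    · show (cU l k hl (cA l k ((cU l k hl)⁻¹ p))).1 = ((cA l k ^ n₁ l) p).1
      show (((n₁ l : ℕ) : ZMod (2^l)) * (((n₁ l : ℕ) : ZMod (2^l)) * p.1 + 1)) = _
      rw [cA_pow]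
      show _ = p.1 + ((n₁ l : ℕ) : ZMod (2^l))
      rw [mul_add, ← mul_assoc, hc hl, one_mul, mul_one, add_comm]
    · show ((cU l k hl (cA l k ((cU l k hl)⁻¹ p))).2 : ZMod k) = ((cA l k ^ n₁ l) p).2
      show p.2 - 1 + 1 = ((cA l k ^ n₁ l) p).2
      rw [cA_pow]
      show p.2 - 1 + 1 = p.2
      ring
  · -- v a v (a^n₂)⁻¹
    rw [h]
    simp only [map_mul, map_inv, map_pow, f0, f2]
    rw [mul_inv_eq_one]
    ext p
    · show (((n₂ l : ℕ) : ZMod (2^l)) * (((n₂ l : ℕ) : ZMod (2^l)) * p.1 + 1)) = ((cA l k ^ n₂ l) p).1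
      rw [cA_pow]
      show _ = p.1 + ((n₂ l : ℕ) : ZMod (2^l))
      rw [mul_add, ← mul_assoc, hd hl, one_mul, mul_one, add_comm]
    · show (-(-p.2) : ZMod k) = ((cA l k ^ n₂ l) p).2
      rw [cA_pow]
      show - - p.2 = p.2
      ring
  · -- v u v u
    rw [h]
    simp only [map_mul, f1, f2]
    ext p
    · show ((n₂ l : ℕ) : ZMod (2^l)) * (((n₁ l : ℕ) : ZMod (2^l)) *
        (((n₂ l : ℕ) : ZMod (2^l)) * (((n₁ l : ℕ) : ZMod (2^l)) * p.1))) = p.1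
      calc ((n₂ l : ℕ) : ZMod (2^l)) * (((n₁ l : ℕ) : ZMod (2^l)) *
          (((n₂ l : ℕ) : ZMod (2^l)) * (((n₁ l : ℕ) : ZMod (2^l)) * p.1)))
          = (((n₂ l : ℕ) : ZMod (2^l)) * ((n₁ l : ℕ) : ZMod (2^l)) *
            (((n₂ l : ℕ) : ZMod (2^l)) * ((n₁ l : ℕ) : ZMod (2^l)))) * p.1 := by ring
        _ = p.1 := by rw [hdc hl, one_mul]
    · show (-(-(p.2 + 1) + 1) : ZMod k) = p.2
      ring

def ψ (l k : ℕ) (hl : 3 ≤ l) (hk : 4 ∣ k) : G l k →* Equiv.Perm (M l k) :=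
  PresentedGroup.toGroup (rels_map_one hl hk)

lemma ψ_a (hl : 3 ≤ l) (hk : 4 ∣ k) : ψ l k hl hk (a l k) = cA l k :=
  PresentedGroup.toGroup.of _

lemma ψ_u (hl : 3 ≤ l) (hk : 4 ∣ k) : ψ l k hl hk (u l k) = cU l k hl :=
  PresentedGroup.toGroup.of _

end Rep2

section Rep3
variable {l k : ℕ}

lemma cA_zpow (s : ℤ) : ∀ p : M l k, (cA l k ^ s) p = (p.1 + (s : ZMod (2^l)), p.2) := by
  induction s using Int.induction_on with
  | zero => intro p; simp
  | succ n ih =>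
      intro p
      rw [zpow_add_one]
      have h1 : (cA l k ^ (n:ℤ) * cA l k) p = (cA l k ^ (n:ℤ)) (cA l k p) := rfl
      have h2 : cA l k p = (p.1 + 1, p.2) := rfl
      rw [h1, h2, ih]
      show (p.1 + 1 + ((n:ℤ) : ZMod (2^l)), p.2) = _
      push_cast
      rw [add_assoc, add_comm (1 : ZMod (2^l))]
  | pred n ih =>
      intro p
      rw [zpow_sub_one]
      have h1 : (cA l k ^ (-n:ℤ) * (cA l k)⁻¹) p = (cA l k ^ (-n:ℤ)) ((cA l k)⁻¹ p) := rfl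
      have h2 : (cA l k)⁻¹ p = (p.1 - 1, p.2) := rfl
      rw [h1, h2, ih]
      show (p.1 - 1 + ((-n:ℤ) : ZMod (2^l)), p.2) = _
      push_cast
      rw [Prod.mk.injEq]
      exact ⟨by ring, rfl⟩

lemma cU_zpow (hl : 3 ≤ l) (j : ℤ) : ∀ y : ZMod k,
    (cU l k hl ^ j) ((0 : ZMod (2^l)), y) = (0, y + (j : ZMod k)) := by
  induction j using Int.induction_on with
  | zero => intro y; simp
  | succ n ih =>
      intro y
      rw [zpow_add_one]
      have h1 : (cU l k hl ^ (n:ℤ) * cU l k hl) (0, y)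
          = (cU l k hl ^ (n:ℤ)) (cU l k hl (0, y)) := rfl
      have h2 : cU l k hl ((0 : ZMod (2^l)), y) = (0, y + 1) := by
        show (((n₁ l : ℕ) : ZMod (2^l)) * 0, y + 1) = _
        rw [mul_zero]
      rw [h1, h2, ih]
      push_cast
      rw [Prod.mk.injEq]
      exact ⟨rfl, by ring⟩
  | pred n ih =>
      intro y
      rw [zpow_sub_one]
      have h1 : (cU l k hl ^ (-n:ℤ) * (cU l k hl)⁻¹) (0, y)
          = (cU l k hl ^ (-n:ℤ)) ((cU l k hl)⁻¹ (0, y)) := rfl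
      have h2 : (cU l k hl)⁻¹ ((0 : ZMod (2^l)), y) = (0, y - 1) := by
        show (((n₁ l : ℕ) : ZMod (2^l)) * 0, y - 1) = _
        rw [mul_zero]
      rw [h1, h2, ih]
      push_cast
      rw [Prod.mk.injEq]
      exact ⟨rfl, by ring⟩

lemma psi_val (hl : 3 ≤ l) (hk : 4 ∣ k) (s j : ℤ) :
    (ψ l k hl hk (a l k ^ s * u l k ^ j)) ((0 : ZMod (2^l)), (0 : ZMod k))
      = ((s : ZMod (2^l)), (j : ZMod k)) := by
  rw [map_mul, map_zpow, map_zpow, ψ_a hl hk, ψ_u hl hk]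
  have h1 : (cA l k ^ s * cU l k hl ^ j) ((0 : ZMod (2^l)), (0 : ZMod k))
      = (cA l k ^ s) ((cU l k hl ^ j) (0, 0)) := rfl
  rw [h1, cU_zpow hl, cA_zpow]
  rw [zero_add, zero_add]

end Rep3

theorem conj_class_odd (l k : ℕ) (hl : 3 ≤ l) (hk : 4 ∣ k) (s i : ℤ) (hi : Odd i) :
    {y : G l k | IsConj (a l k ^ s * u l k ^ i) y} =
      {a l k ^ s * u l k ^ i,
       a l k ^ (s + 2 ^ (l - 1)) * u l k ^ i,
       a l k ^ (-s) * u l k ^ (-i),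
       a l k ^ (-s + 2 ^ (l - 1)) * u l k ^ (-i)} ∧
    {y : G l k | IsConj (a l k ^ s * u l k ^ i) y}.ncard = 4 := by
  have hpow : (2:ℤ) * 2 ^ (l - 1) = 2 ^ l := by
    rw [← pow_succ']
    congr 1
    omega
  set x1 := a l k ^ s * u l k ^ i with hx1
  set x2 := a l k ^ (s + 2 ^ (l - 1)) * u l k ^ i with hx2
  set x3 := a l k ^ (-s) * u l k ^ (-i) with hx3
  set x4 := a l k ^ (-s + 2 ^ (l - 1)) * u l k ^ (-i) with hx4
  set S : Set (G l k) := {x1, x2, x3, x4} with hS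
  have hi' : Odd (-i) := hi.neg
  have m1 : x1 ∈ S := by
    simp only [hS, Set.mem_insert_iff, Set.mem_singleton_iff]; tauto
  have m2 : x2 ∈ S := by
    simp only [hS, Set.mem_insert_iff, Set.mem_singleton_iff]; tauto
  have m3 : x3 ∈ S := by
    simp only [hS, Set.mem_insert_iff, Set.mem_singleton_iff]; tauto
  have m4 : x4 ∈ S := by
    simp only [hS, Set.mem_insert_iff, Set.mem_singleton_iff]; tauto
  -- the structure lemma
  have hmem : ∀ y ∈ S, ∃ m j : ℤ, Odd j ∧ y = a l k ^ m * u l k ^ j ∧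
      a l k ^ m * u l k ^ j ∈ S ∧
      a l k ^ (m + 2 ^ (l - 1)) * u l k ^ j ∈ S ∧
      a l k ^ (-m) * u l k ^ (-j) ∈ S ∧
      a l k ^ (-m + 2 ^ (l - 1)) * u l k ^ (-j) ∈ S := by
    intro y hy
    simp only [hS, Set.mem_insert_iff, Set.mem_singleton_iff] at hy
    rcases hy with rfl | rfl | rfl | rfl
    · exact ⟨s, i, hi, rfl, m1, m2, m3, m4⟩
    · refine ⟨s + 2 ^ (l - 1), i, hi, rfl, m2, ?_, ?_, ?_⟩
      · have e : a l k ^ (s + 2 ^ (l-1) + 2 ^ (l-1)) = a l k ^ s :=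
          a_zpow_eq ⟨1, by rw [← hpow]; ring⟩
        rw [e]; exact m1
      · have e : a l k ^ (-(s + 2 ^ (l-1))) = a l k ^ (-s + 2 ^ (l-1)) :=
          a_zpow_eq ⟨-1, by rw [← hpow]; ring⟩
        rw [e]; exact m4
      · have e : a l k ^ (-(s + 2 ^ (l-1)) + 2 ^ (l-1)) = a l k ^ (-s) :=
          a_zpow_eq ⟨0, by ring⟩
        rw [e]; exact m3
    · refine ⟨-s, -i, hi', rfl, m3, m4, ?_, ?_⟩
      · simp only [neg_neg]; exact m1
      · simp only [neg_neg]; exact m2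
    · refine ⟨-s + 2 ^ (l - 1), -i, hi', rfl, m4, ?_, ?_, ?_⟩
      · have e : a l k ^ (-s + 2 ^ (l-1) + 2 ^ (l-1)) = a l k ^ (-s) :=
          a_zpow_eq ⟨1, by rw [← hpow]; ring⟩
        rw [e]; exact m3
      · simp only [neg_neg]
        have e : a l k ^ (-(-s + 2 ^ (l-1))) = a l k ^ (s + 2 ^ (l-1)) :=
          a_zpow_eq ⟨-1, by rw [← hpow]; ring⟩
        rw [e]; exact m2
      · simp only [neg_neg]
        have e : a l k ^ (-(-s + 2 ^ (l-1)) + 2 ^ (l-1)) = a l k ^ s :=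
          a_zpow_eq ⟨0, by ring⟩
        rw [e]; exact m1
  -- the stabilizing subgroup
  let H : Subgroup (G l k) :=
  { carrier := {g | ∀ y ∈ S, g * y * g⁻¹ ∈ S ∧ g⁻¹ * y * g ∈ S}
    one_mem' := by
      intro y hy
      constructor <;> simpa using hy
    mul_mem' := by
      intro g h hg hh y hy
      constructor
      · have e : g * h * y * (g * h)⁻¹ = g * (h * y * h⁻¹) * g⁻¹ := by group
        rw [e]; exact (hg _ (hh y hy).1).1
      · have e : (g * h)⁻¹ * y * (g * h) = h⁻¹ * (g⁻¹ * y * g) * h := by group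
        rw [e]; exact (hh _ (hg y hy).2).2
    inv_mem' := by
      intro g hg y hy
      rw [inv_inv]
      exact ⟨(hg y hy).2, (hg y hy).1⟩ }
  have hgen : ∀ j : Fin 3, PresentedGroup.of (rels := rels l k) j ∈ H := by
    intro j
    fin_cases j
    · -- generator a
      show ∀ y ∈ S, a l k * y * (a l k)⁻¹ ∈ S ∧ (a l k)⁻¹ * y * a l k ∈ S
      intro y hy
      obtain ⟨m, j, hj, rfl, h0, h1, h2, h3⟩ := hmem y hy
      constructor
      · rw [conj_a hl hj m]; exact h1
      · rw [conj_a_inv hl hj m]; exact h1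
    · -- generator u
      show ∀ y ∈ S, u l k * y * (u l k)⁻¹ ∈ S ∧ (u l k)⁻¹ * y * u l k ∈ S
      intro y hy
      obtain ⟨m, j, hj, rfl, h0, h1, h2, h3⟩ := hmem y hy
      constructor
      · rw [conj_u m j]
        rcases red1 hl m with h | h <;> rw [h]
        exacts [h0, h1]
      · rw [conj_u_inv hl m j]
        rcases red1 hl m with h | h <;> rw [h]
        exacts [h0, h1]
    · -- generator v
      show ∀ y ∈ S, v l k * y * (v l k)⁻¹ ∈ S ∧ (v l k)⁻¹ * y * v l k ∈ S
      intro y hy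
      obtain ⟨m, j, hj, rfl, h0, h1, h2, h3⟩ := hmem y hy
      have main : v l k * (a l k ^ m * u l k ^ j) * (v l k)⁻¹ ∈ S := by
        rw [conj_v m j]
        rcases red2 hl m with h | h <;> rw [h]
        exacts [h2, h3]
      refine ⟨main, ?_⟩
      rw [v_inv]
      have e : v l k * (a l k ^ m * u l k ^ j) * v l k
          = v l k * (a l k ^ m * u l k ^ j) * (v l k)⁻¹ := by rw [v_inv]
      rw [e]; exact main
  -- inclusion ⊆
  have hsub : {y : G l k | IsConj x1 y} ⊆ S := by
    intro y hy
    obtain ⟨g, hg⟩ := isConj_iff.mp hy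
    have hgH : g ∈ H := PresentedGroup.generated_by (rels l k) H hgen g
    have := (hgH x1 m1).1
    rwa [hg] at this
  -- inclusion ⊇
  have hsup : S ⊆ {y : G l k | IsConj x1 y} := by
    have c2 : IsConj x1 x2 := isConj_iff.mpr ⟨a l k, conj_a hl hi s⟩
    have c34 : IsConj x1 x3 ∧ IsConj x1 x4 := by
      have hv := conj_v (l := l) (k := k) s i
      rcases red2 (l := l) (k := k) hl s with h | h <;> rw [h] at hv
      · have c3 : IsConj x1 x3 := isConj_iff.mpr ⟨v l k, hv⟩
        have c4 : IsConj x3 x4 := isConj_iff.mpr ⟨a l k, conj_a hl hi' (-s)⟩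
        exact ⟨c3, c3.trans c4⟩
      · have c4 : IsConj x1 x4 := isConj_iff.mpr ⟨v l k, hv⟩
        have c3 : IsConj x4 x3 := by
          refine isConj_iff.mpr ⟨a l k, ?_⟩
          rw [conj_a hl hi' (-s + 2 ^ (l-1))]
          have e : a l k ^ (-s + 2 ^ (l-1) + 2 ^ (l-1)) = a l k ^ (-s) :=
            a_zpow_eq ⟨1, by rw [← hpow]; ring⟩
          rw [e]
        exact ⟨c4.trans c3, c4⟩
    intro y hy
    simp only [hS, Set.mem_insert_iff, Set.mem_singleton_iff] at hy
    rcases hy with rfl | rfl | rfl | rfl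
    exacts [IsConj.refl _, c2, c34.1, c34.2]
  have hset : {y : G l k | IsConj x1 y} = S := subset_antisymm hsub hsup
  -- distinctness
  have key : ∀ (m j m' j' : ℤ),
      ((m : ZMod (2^l)) ≠ (m' : ZMod (2^l)) ∨ (j : ZMod k) ≠ (j' : ZMod k)) →
      a l k ^ m * u l k ^ j ≠ a l k ^ m' * u l k ^ j' := by
    intro m j m' j' hne h
    have := congrArg (fun g => (ψ l k hl hk g) ((0 : ZMod (2^l)), (0 : ZMod k))) h
    simp only [psi_val hl hk] at this
    rw [Prod.mk.injEq] at this
    rcases hne with hne | hne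
    exacts [hne this.1, hne this.2]
  have h2l : ((2 ^ (l-1) : ℤ) : ZMod (2^l)) ≠ 0 := by
    intro h0
    rw [ZMod.intCast_zmod_eq_zero_iff_dvd] at h0
    have hdvd := h0
    have h1 : ((2:ℤ)^l : ℤ) ∣ 2 ^ (l-1) := by push_cast at hdvd ⊢; exact hdvd
    have h2 : (2:ℤ)^l ≤ 2 ^ (l-1) := Int.le_of_dvd (by positivity) h1
    have h3 : (2:ℤ)^(l-1) < 2 ^ l := by
      apply pow_lt_pow_right₀ (by norm_num)
      omega
    linarith
  have hfst : ∀ m : ℤ, ((m : ZMod (2^l))) ≠ (((m + 2 ^ (l-1) : ℤ)) : ZMod (2^l)) := by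
    intro m h
    rw [Int.cast_add] at h
    exact h2l (left_eq_add.mp h)
  have hii : ((i : ZMod k)) ≠ (((-i : ℤ)) : ZMod k) := by
    intro h
    push_cast at h
    have h2 : ((2 * i : ℤ) : ZMod k) = 0 := by push_cast; linear_combination h
    have h3 : (k : ℤ) ∣ 2 * i := (CharP.intCast_eq_zero_iff (ZMod k) k _).mp h2
    obtain ⟨c, rfl⟩ := hk
    obtain ⟨d, hd⟩ := h3
    obtain ⟨e, rfl⟩ := hi
    have h4 : (4:ℤ) ∣ 2 * (2*e+1) := by
      refine ⟨(c:ℤ) * d, ?_⟩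
      rw [hd]
      push_cast
      ring
    obtain ⟨f, hf⟩ := h4
    omega
  have hii' : (((-i : ℤ)) : ZMod k) ≠ ((i : ZMod k)) := hii.symm
  have n12 : x1 ≠ x2 := key _ _ _ _ (Or.inl (hfst s))
  have n13 : x1 ≠ x3 := key _ _ _ _ (Or.inr hii)
  have n14 : x1 ≠ x4 := key _ _ _ _ (Or.inr hii)
  have n23 : x2 ≠ x3 := key _ _ _ _ (Or.inr hii)
  have n24 : x2 ≠ x4 := key _ _ _ _ (Or.inr hii)
  have n34 : x3 ≠ x4 := key _ _ _ _ (Or.inl (hfst (-s)))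
  refine ⟨hset, ?_⟩
  rw [hset, hS]
  rw [Set.ncard_insert_of_notMem (by simp [n12, n13, n14]),
    Set.ncard_insert_of_notMem (by simp [n23, n24]),
    Set.ncard_insert_of_notMem (by simp [n34]),
    Set.ncard_singleton]
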